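/- Let K₁ = {0} ⊂ ℂ and K₂ = {w ∈ ℂ : |w| ≤ 1}, and let f : K₁ × K₂ → ℂ be defined by f(z, w) = |w|. Then f is continuous on K₁ × K₂ (and holomorphic on its empty interior), but f is not the uniform limit on K₁ × K₂ of functions holomorphic on open neighborhoods of K₁ × K₂ in ℂ². -/

import Mathlib

open Metric Complex

theorem stmt6 :
    let K : Set (ℂ × ℂ) := {(0 : ℂ)} ×ˢ Metric.closedBall (0 : ℂ) 1
    let f : ℂ × ℂ → ℂ := fun p => (‖p.2‖ : ℂ)
    ContinuousOn f K ∧ interior K = ∅ ∧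
      ¬ ∀ ε > (0 : ℝ), ∃ (g : ℂ × ℂ → ℂ) (V : Set (ℂ × ℂ)),
          IsOpen V ∧ K ⊆ V ∧ DifferentiableOn ℂ g V ∧
          ∀ p ∈ K, ‖f p - g p‖ < ε := by
  intro K f
  refine ⟨?_, ?_, ?_⟩
  · exact (Complex.continuous_ofReal.comp (continuous_norm.comp continuous_snd)).continuousOn
  · rw [show K = {(0:ℂ)} ×ˢ Metric.closedBall (0:ℂ) 1 from rfl, interior_prod_eq,
      interior_singleton, Set.empty_prod]
  · intro hyp
    obtain ⟨g, V, hVopen, hKV, hgdiff, happrox⟩ := hyp (1/4) (by norm_num)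
    set h : ℂ → ℂ := fun w => g (0, w) with hh
    have hU : ∀ w ∈ closedBall (0:ℂ) 1, ((0:ℂ), w) ∈ V := fun w hw =>
      hKV ⟨rfl, hw⟩
    have hdiff : DifferentiableOn ℂ h {w : ℂ | ((0:ℂ), w) ∈ V} := by
      intro w hw
      have : DifferentiableAt ℂ g ((0:ℂ), w) :=
        (hgdiff.differentiableAt (hVopen.mem_nhds hw))
      exact (this.comp w ((differentiableAt_const _).prodMk differentiableAt_id)).differentiableWithinAt
    have hsub : closedBall (0:ℂ) 1 ⊆ {w : ℂ | ((0:ℂ), w) ∈ V} := fun w hw => hU w hw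
    have hopenU : IsOpen {w : ℂ | ((0:ℂ), w) ∈ V} :=
      hVopen.preimage (continuous_const.prodMk continuous_id)
    have hdcc : DiffContOnCl ℂ h (ball (0:ℂ) 1) := by
      apply DifferentiableOn.diffContOnCl
      rw [closure_ball (0:ℂ) one_ne_zero]
      exact hdiff.mono hsub
    have hcauchy : (∮ z in C(0, 1), (z - 0)⁻¹ • h z) = (2 * Real.pi * I) • h 0 :=
      hdcc.circleIntegral_sub_inv_smul (by simp)
    have hone : (∮ z in C(0, 1), ((z : ℂ) - 0)⁻¹) = 2 * Real.pi * I :=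
      circleIntegral.integral_sub_inv_of_mem_ball (by simp)
    -- integrability
    have hi1 : CircleIntegrable (fun z => (z - 0)⁻¹ • h z) 0 1 := by
      apply ContinuousOn.circleIntegrable zero_le_one
      apply ContinuousOn.smul (f := fun z : ℂ => (z - 0)⁻¹) (g := h)
      · exact ContinuousOn.inv₀ (by fun_prop) (fun z hz => by
          simp only [mem_sphere_iff_norm, sub_zero] at hz
          simp only [sub_zero]
          intro h0; rw [h0] at hz; norm_num at hz)
      · exact (hdiff.continuousOn).mono (sphere_subset_closedBall.trans hsub)
    have hi2 : CircleIntegrable (fun z => ((z : ℂ) - 0)⁻¹) 0 1 := by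
      apply ContinuousOn.circleIntegrable zero_le_one
      exact ContinuousOn.inv₀ (by fun_prop) (fun z hz => by
        simp only [mem_sphere_iff_norm, sub_zero] at hz
        simp only [sub_zero]
        intro h0; rw [h0] at hz; norm_num at hz)
    have hdiffint : (∮ z in C(0, 1), ((z - 0)⁻¹ • h z - (z - 0)⁻¹)) =
        (2 * Real.pi * I) • h 0 - 2 * Real.pi * I := by
      rw [circleIntegral.integral_sub hi1 hi2, hcauchy, hone]
    have hbound : ‖(∮ z in C(0, 1), ((z - 0)⁻¹ • h z - (z - 0)⁻¹))‖ ≤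
        2 * Real.pi * 1 * (1/4) := by
      apply circleIntegral.norm_integral_le_of_norm_le_const zero_le_one
      intro z hz
      simp only [mem_sphere_iff_norm, sub_zero] at hz
      have habs : ‖z‖ = 1 := hz
      have hzK : ((0:ℂ), z) ∈ K := ⟨rfl, by simp [mem_closedBall, habs.le, Complex.dist_eq]⟩
      have := happrox _ hzK
      simp only [f] at this
      rw [habs] at this
      have : ‖(1 : ℂ) - h z‖ < 1/4 := by
        simpa using this
      simp only [sub_zero, smul_eq_mul]
      calc ‖z⁻¹ * h z - z⁻¹‖ = ‖z⁻¹ * (h z - 1)‖ := by rw [mul_sub, mul_one]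
      _ = ‖z‖⁻¹ * ‖h z - 1‖ := by rw [norm_mul, norm_inv]
      _ = ‖h z - 1‖ := by rw [hz, inv_one, one_mul]
      _ ≤ 1/4 := by rw [← norm_neg]; simpa using this.le
    rw [hdiffint] at hbound
    have hfac : (2 * Real.pi * I) • h 0 - 2 * Real.pi * I = (2 * Real.pi * I) * (h 0 - 1) := by
      simp [smul_eq_mul]; ring
    rw [hfac, norm_mul] at hbound
    have hpinorm : ‖(2 * (Real.pi:ℂ) * I)‖ = 2 * Real.pi := by
      rw [norm_mul, norm_mul, Complex.norm_I, mul_one, Complex.norm_real,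
        Real.norm_eq_abs, _root_.abs_of_nonneg Real.pi_pos.le]
      norm_num
    rw [hpinorm] at hbound
    have hpi : (0:ℝ) < 2 * Real.pi := by positivity
    have h1 : ‖h 0 - 1‖ ≤ 1/4 := by
      nlinarith [norm_nonneg (h 0 - 1)]
    -- but ‖h 0‖ < 1/4
    have h0K : ((0:ℂ), (0:ℂ)) ∈ K := ⟨rfl, by simp⟩
    have h2 := happrox _ h0K
    simp only [f] at h2
    have h2' : ‖h 0‖ < 1/4 := by simpa using h2
    have : (1:ℝ) ≤ ‖h 0 - 1‖ + ‖h 0‖ := by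
      calc (1:ℝ) = ‖(h 0 - 1) - h 0‖ := by simp
      _ ≤ ‖h 0 - 1‖ + ‖h 0‖ := norm_sub_le _ _
    linarith
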